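/- arXiv:1401.2794 — 4 statements merged into one kernel-verified Lean document; each statement's English description precedes it below -/
import Mathlib

section
/- Let C be an [n,k] linear code over F_p with parity check matrix H, and let H' be a non-negative integral matrix with H = H' mod p. Then the code ideal I(C) = ⟨x^a − x^b : a − b ∈ C⟩ + ⟨x_i^p − 1 : 1 ≤ i ≤ n⟩ in K[x_1,…,x_n] equals { f(x, 1) : f ∈ I_{H'(p)} }, the image of the toric ideal of the extended matrix H'(p) = (H' | p·I_m) under substituting 1 for all y-variables. -/
open MvPolynomial

/-- The code ideal I(C) = ⟨x^a − x^b : (a − b mod p) ∈ C⟩ + ⟨x_i^p − 1⟩. -/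
noncomputable def codeIdeal (p : ℕ) (K : Type*) [Field K] {n : ℕ}
    (C : Submodule (ZMod p) (Fin n → ZMod p)) : Ideal (MvPolynomial (Fin n) K) :=
  Ideal.span
    ({f | ∃ a b : Fin n →₀ ℕ,
        (fun i => ((a i : ZMod p) - (b i : ZMod p))) ∈ C ∧
        f = monomial a (1 : K) - monomial b 1} ∪
     {f | ∃ i : Fin n, f = X i ^ p - 1})

/-- The toric ideal of the extended matrix A(p) = (A | p·I_m) for a non-negative
integral m×n matrix A: the kernel of x_i ↦ ∏_j y_j^{A j i}, y-variable j ↦ y_j^p. -/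
noncomputable def toricIdealExt (p : ℕ) (K : Type*) [Field K] {m n : ℕ}
    (A : Matrix (Fin m) (Fin n) ℕ) : Ideal (MvPolynomial (Fin (n) ⊕ Fin m) K) :=
  RingHom.ker (MvPolynomial.aeval
    (Sum.elim (fun i => ∏ j : Fin m, (X j : MvPolynomial (Fin m) K) ^ A j i)
              (fun j => (X j : MvPolynomial (Fin m) K) ^ p))).toRingHom

lemma mon_eq_monomial (K : Type*) [Field K] {n : ℕ} (a : Fin n →₀ ℕ) :
    (monomial a (1:K)) = ∏ i, X i ^ a i := by
  rw [monomial_eq, map_one, one_mul, Finsupp.prod_fintype]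
  intro i; exact pow_zero _

lemma mem_codeIdeal (p : ℕ) (K : Type*) [Field K] {n : ℕ}
    (C : Submodule (ZMod p) (Fin n → ZMod p)) (a b : Fin n → ℕ)
    (h : (fun i => ((a i : ZMod p) - (b i : ZMod p))) ∈ C) :
    (∏ i, X i ^ a i) - (∏ i, X i ^ b i) ∈ codeIdeal p K C := by
  apply Ideal.subset_span
  left
  exact ⟨Finsupp.equivFunOnFinite.symm a, Finsupp.equivFunOnFinite.symm b, by simpa using h,
    by rw [mon_eq_monomial, mon_eq_monomial]; rfl⟩

lemma aux_prod {M : Type*} [CommMonoid M] {n m : ℕ} (x : Fin n → M)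
    (c : Fin m → Fin n → ℕ) (e : Fin m → ℕ) :
    ∏ j, (∏ i, x i ^ c j i) ^ e j = ∏ i, x i ^ (∑ j, c j i * e j) := by
  simp_rw [← Finset.prod_pow, ← pow_mul]
  rw [Finset.prod_comm]
  simp_rw [Finset.prod_pow_eq_pow_sum]

lemma X_eq_prod_single {n : ℕ} (K : Type*) [Field K] (i : Fin n) :
    (X i : MvPolynomial (Fin n) K) = ∏ i', X i' ^ (Pi.single i 1 : Fin n → ℕ) i' := by
  rw [Finset.prod_eq_single i]
  · simp
  · intro b _ hb; simp [Pi.single_apply, hb]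
  · simp

/-- for a code C over F_p with parity check matrix H and non-negative
integral lift H' of H, the code ideal I(C) equals { f(x,1) : f ∈ I_{H'(p)} }. -/
theorem stmt_2 (p : ℕ) (hp : p.Prime) (K : Type*) [Field K] (n m k : ℕ)
    (C : Submodule (ZMod p) (Fin n → ZMod p)) (hdim : Module.finrank (ZMod p) C = k)
    (H : Matrix (Fin m) (Fin n) (ZMod p))
    (hH : ∀ c, c ∈ C ↔ H.mulVec c = 0)
    (H' : Matrix (Fin m) (Fin n) ℕ) (hH' : ∀ i j, ((H' i j : ZMod p)) = H i j) :
    (codeIdeal p K C : Set (MvPolynomial (Fin n) K)) =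
      (MvPolynomial.aeval (Sum.elim MvPolynomial.X (fun _ => 1)) :
          MvPolynomial (Fin n ⊕ Fin m) K →ₐ[K] MvPolynomial (Fin n) K) ''
        (toricIdealExt p K H' : Set (MvPolynomial (Fin n ⊕ Fin m) K)) := by
  haveI : Fact p.Prime := ⟨hp⟩
  classical
  set σ : MvPolynomial (Fin n ⊕ Fin m) K →ₐ[K] MvPolynomial (Fin n) K :=
    MvPolynomial.aeval (Sum.elim MvPolynomial.X (fun _ => 1)) with hσdef
  set Θ : MvPolynomial (Fin n ⊕ Fin m) K →ₐ[K] MvPolynomial (Fin m) K :=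
    MvPolynomial.aeval
      (Sum.elim (fun i => ∏ j : Fin m, (X j : MvPolynomial (Fin m) K) ^ H' j i)
                (fun j => (X j : MvPolynomial (Fin m) K) ^ p)) with hΘdef
  have hmemT : ∀ f, f ∈ toricIdealExt p K H' ↔ Θ f = 0 := fun f => Iff.rfl
  have hΘX : ∀ i : Fin n,
      Θ (X (Sum.inl i)) = ∏ j : Fin m, (X j : MvPolynomial (Fin m) K) ^ H' j i := by
    intro i; rw [hΘdef, aeval_X, Sum.elim_inl]
  have hΘY : ∀ j : Fin m, Θ (X (Sum.inr j)) = (X j : MvPolynomial (Fin m) K) ^ p := by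
    intro j; rw [hΘdef, aeval_X, Sum.elim_inr]
  have hσX : ∀ i : Fin n, σ (X (Sum.inl i)) = X i := by
    intro i; rw [hσdef, aeval_X, Sum.elim_inl]
  have hσY : ∀ j : Fin m, σ (X (Sum.inr j)) = 1 := by
    intro j; rw [hσdef, aeval_X, Sum.elim_inr]
  have hcompute : ∀ (c : Fin n → ℕ) (u : Fin m → ℕ),
      Θ ((∏ i, X (Sum.inl i) ^ c i) * (∏ j, X (Sum.inr j) ^ u j))
        = ∏ j, (X j : MvPolynomial (Fin m) K) ^ ((∑ i, H' j i * c i) + p * u j) := by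
    intro c u
    rw [map_mul, map_prod, map_prod]
    simp only [map_pow, hΘX, hΘY]
    rw [aux_prod, ← Finset.prod_mul_distrib]
    exact Finset.prod_congr rfl fun j _ => by rw [← pow_mul, ← pow_add]
  -- upward direction: every element of the code ideal is the image of a toric element
  have dir1 : ∀ g ∈ codeIdeal p K C, ∃ f, Θ f = 0 ∧ σ f = g := by
    intro g hg
    rw [codeIdeal] at hg
    induction hg using Submodule.span_induction with
    | mem g hgen =>
      rcases hgen with ⟨a, b, hC, rfl⟩ | ⟨i, rfl⟩
      · -- binomial case
        have hAB : ∀ j,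
            ((∑ i, H' j i * a i : ℕ) : ZMod p) = ((∑ i, H' j i * b i : ℕ) : ZMod p) := by
          intro j
          have h0 := congrFun ((hH _).mp hC) j
          simp only [Matrix.mulVec, dotProduct, Pi.zero_apply] at h0
          push_cast
          simp_rw [hH']
          rw [← sub_eq_zero, ← Finset.sum_sub_distrib, ← h0]
          exact Finset.sum_congr rfl fun i _ => (mul_sub _ _ _).symm
        have hvw : ∀ j, ∃ v w : ℕ,
            (∑ i, H' j i * a i) + p * v = (∑ i, H' j i * b i) + p * w := by
          intro j
          rcases le_total (∑ i, H' j i * a i) (∑ i, H' j i * b i) with h | h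
          · refine ⟨((∑ i, H' j i * b i) - (∑ i, H' j i * a i)) / p, 0, ?_⟩
            have hdvd : p ∣ ((∑ i, H' j i * b i) - (∑ i, H' j i * a i)) := by
              have : (((∑ i, H' j i * b i) - (∑ i, H' j i * a i) : ℕ) : ZMod p) = 0 := by
                rw [Nat.cast_sub h, hAB j, sub_self]
              exact (ZMod.natCast_eq_zero_iff _ _).mp this
            rw [Nat.mul_div_cancel' hdvd, Nat.add_sub_cancel' h, mul_zero, add_zero]
          · refine ⟨0, ((∑ i, H' j i * a i) - (∑ i, H' j i * b i)) / p, ?_⟩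
            have hdvd : p ∣ ((∑ i, H' j i * a i) - (∑ i, H' j i * b i)) := by
              have : (((∑ i, H' j i * a i) - (∑ i, H' j i * b i) : ℕ) : ZMod p) = 0 := by
                rw [Nat.cast_sub h, hAB j, sub_self]
              exact (ZMod.natCast_eq_zero_iff _ _).mp this
            rw [Nat.mul_div_cancel' hdvd, Nat.add_sub_cancel' h, mul_zero, add_zero]
        choose v w hvw using hvw
        refine ⟨(∏ i, X (Sum.inl i) ^ a i) * (∏ j, X (Sum.inr j) ^ v j)
              - (∏ i, X (Sum.inl i) ^ b i) * (∏ j, X (Sum.inr j) ^ w j), ?_, ?_⟩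
        · rw [map_sub, hcompute, hcompute, sub_eq_zero]
          exact Finset.prod_congr rfl fun j _ => by rw [hvw j]
        · rw [map_sub, map_mul, map_mul, map_prod, map_prod, map_prod, map_prod]
          simp only [map_pow, hσX, hσY, one_pow, Finset.prod_const_one, mul_one]
          rw [mon_eq_monomial, mon_eq_monomial]
      · -- x_i^p - 1 case
        refine ⟨X (Sum.inl i) ^ p - ∏ j, X (Sum.inr j) ^ H' j i, ?_, ?_⟩
        · rw [map_sub, map_pow, hΘX, map_prod]
          simp only [map_pow, hΘY]
          rw [← Finset.prod_pow, sub_eq_zero]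
          exact Finset.prod_congr rfl fun j _ => by rw [← pow_mul, ← pow_mul, mul_comm]
        · rw [map_sub, map_pow, hσX, map_prod]
          simp only [map_pow, hσY, one_pow, Finset.prod_const_one]
    | zero => exact ⟨0, map_zero _, map_zero _⟩
    | add x y hx hy ihx ihy =>
      obtain ⟨f₁, h1, h2⟩ := ihx
      obtain ⟨f₂, h3, h4⟩ := ihy
      exact ⟨f₁ + f₂, by rw [map_add, h1, h3, add_zero], by rw [map_add, h2, h4]⟩
    | smul r x hx ih =>
      obtain ⟨f, h1, h2⟩ := ih
      refine ⟨rename Sum.inl r * f, by rw [map_mul, h1, mul_zero], ?_⟩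
      rw [map_mul, h2, smul_eq_mul]
      congr 1
      rw [hσdef, aeval_rename]
      have : (Sum.elim (X : Fin n → MvPolynomial (Fin n) K) (fun _ : Fin m => 1))
          ∘ (Sum.inl : Fin n → Fin n ⊕ Fin m) = X := rfl
      rw [this, aeval_X_left_apply]
  -- downward direction
  have dir2 : ∀ f, Θ f = 0 → σ f ∈ codeIdeal p K C := by
    set I := codeIdeal p K C with hIdef
    -- the induced injection (Fin n → ZMod p) ⧸ C →ₗ (Fin m → ZMod p)
    set ι : ((Fin n → ZMod p) ⧸ C) →ₗ[ZMod p] (Fin m → ZMod p) :=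
      C.liftQ H.mulVecLin (fun c hc => by simpa using (hH c).mp hc) with hιdef
    have hιker : LinearMap.ker ι = ⊥ :=
      Submodule.ker_liftQ_eq_bot _ _ _ (fun c hc => (hH c).mpr (by simpa using hc))
    obtain ⟨r, hr⟩ := ι.exists_leftInverse_of_injective hιker
    have hbZ : ∀ j : Fin m, ∃ v, Submodule.Quotient.mk v = r (Pi.single j 1) :=
      fun j => Submodule.Quotient.mk_surjective C _
    choose bZ hbZ using hbZ
    set b : Fin m → Fin n → ℕ := fun j i => (bZ j i).val with hbdef
    have hb : ∀ j i, ((b j i : ZMod p)) = bZ j i := fun j i => by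
      simp [hbdef, ZMod.natCast_val, ZMod.cast_id]
    set ψ : MvPolynomial (Fin m) K →ₐ[K] (MvPolynomial (Fin n) K ⧸ I) :=
      aeval (fun j => Ideal.Quotient.mk I (∏ i, X i ^ b j i)) with hψdef
    have mkmon : ∀ a c : Fin n → ℕ,
        (fun i => ((a i : ZMod p) - (c i : ZMod p))) ∈ C →
        Ideal.Quotient.mk I (∏ i, X i ^ a i) = Ideal.Quotient.mk I (∏ i, X i ^ c i) := by
      intro a c h
      rw [Ideal.Quotient.eq]
      exact mem_codeIdeal p K C a c h
    have hcomp : ∀ f, Ideal.Quotient.mk I (σ f) = ψ (Θ f) := by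
      have hext : (Ideal.Quotient.mkₐ K I).comp σ = ψ.comp Θ := by
        apply MvPolynomial.algHom_ext
        rintro (i | j)
        · -- inl case
          rw [AlgHom.comp_apply, AlgHom.comp_apply, hσdef, hΘdef, aeval_X, aeval_X,
            Sum.elim_inl, Sum.elim_inl]
          rw [map_prod]
          simp only [map_pow, hψdef, aeval_X]
          simp only [← map_pow, ← map_prod]
          rw [aux_prod]
          rw [Ideal.Quotient.mkₐ_eq_mk, X_eq_prod_single]
          apply mkmon
          have hq : (Submodule.Quotient.mk (fun i' => ((∑ j, b j i' * H' j i : ℕ) : ZMod p))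
              : (Fin n → ZMod p) ⧸ C)
              = Submodule.Quotient.mk
                  (fun i' => (((Pi.single i 1 : Fin n → ℕ) i' : ℕ) : ZMod p)) := by
            have hE : (fun i' => ((∑ j, b j i' * H' j i : ℕ) : ZMod p))
                = ∑ j, H j i • bZ j := by
              funext i'
              push_cast
              simp only [Finset.sum_apply, Pi.smul_apply, smul_eq_mul]
              exact Finset.sum_congr rfl fun j _ => by rw [hb, hH', mul_comm]
            have hδ : (fun i' => (((Pi.single i 1 : Fin n → ℕ) i' : ℕ) : ZMod p))
                = (Pi.single i 1 : Fin n → ZMod p) := by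
              funext i'
              simp [Pi.single_apply]
            rw [hE, hδ]
            have s1 : (Submodule.Quotient.mk (∑ j, H j i • bZ j) : (Fin n → ZMod p) ⧸ C)
                = ∑ j, H j i • (r (Pi.single j 1)) := by
              rw [← Submodule.mkQ_apply, map_sum]
              exact Finset.sum_congr rfl fun j _ => by
                rw [map_smul, Submodule.mkQ_apply, hbZ]
            rw [s1]
            have s2 : (∑ j, H j i • (r (Pi.single j 1)))
                = r (∑ j, H j i • (Pi.single j 1 : Fin m → ZMod p)) := by
              rw [map_sum]
              exact Finset.sum_congr rfl fun j _ => (map_smul r _ _).symm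
            rw [s2]
            have s3 : (∑ j, H j i • (Pi.single j 1 : Fin m → ZMod p))
                = H.mulVec (Pi.single i 1) := by
              funext j'
              rw [Matrix.mulVec_single]
              simp [Finset.sum_apply, Pi.single_apply]
            rw [s3]
            have s4 : H.mulVec (Pi.single i 1)
                = ι (Submodule.Quotient.mk (Pi.single i 1)) := by
              rw [hιdef, Submodule.liftQ_apply, Matrix.mulVecLin_apply]
            rw [s4, ← LinearMap.comp_apply, hr, LinearMap.id_apply]
          exact (Submodule.Quotient.eq C).mp hq.symm
        · -- inr case
          rw [AlgHom.comp_apply, AlgHom.comp_apply, hσdef, hΘdef, aeval_X, aeval_X,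
            Sum.elim_inr, Sum.elim_inr]
          rw [map_pow]
          simp only [hψdef, aeval_X]
          rw [← map_pow, ← Finset.prod_pow]
          simp_rw [← pow_mul]
          have h1 : Ideal.Quotient.mk I (∏ i, (X i : MvPolynomial (Fin n) K) ^ (b j i * p))
              = Ideal.Quotient.mk I (∏ i, X i ^ (0 : ℕ)) := by
            apply mkmon
            have : (fun i => (((b j i * p : ℕ) : ZMod p) - ((0:ℕ) : ZMod p)))
                = (0 : Fin n → ZMod p) := by
              funext i'
              push_cast
              simp [ZMod.natCast_self]
            rw [this]
            exact C.zero_mem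
          rw [h1]
          simp
      intro f
      have := congrFun (congrArg (fun g => g.toFun) hext) f
      simpa using this
    intro f hf
    have := hcomp f
    rw [hf, map_zero] at this
    exact (Ideal.Quotient.eq_zero_iff_mem).mp this
  ext g
  constructor
  · intro hg
    obtain ⟨f, hf1, hf2⟩ := dir1 g hg
    exact ⟨f, (hmemT f).mpr hf1, hf2⟩
  · rintro ⟨f, hf, rfl⟩
    exact dir2 f ((hmemT f).mp hf)
end

section
/- For any vectors a, b ∈ F_q^n, the monomials x^{▲a + ▲b} and x^{▲(a+b)} are congruent modulo the ideal I_q encoding the additive structure of F_q, i.e., x^{▲a+▲b} − x^{▲(a+b)} ∈ I_q. -/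
set_option linter.unusedSectionVars false


open MvPolynomial

/-- The crossing map ▲ : F_q^n → ℕ^{n(q−1)} (as a finitely supported exponent
vector): coordinate α^j ↦ unit vector e_j, 0 ↦ zero vector. -/
noncomputable def crossF {F : Type*} [Field F] [DecidableEq F] (q n : ℕ) (α : F)
    (a : Fin n → F) : (Fin n × Fin (q - 1)) →₀ ℕ :=
  Finsupp.equivFunOnFinite.symm
    fun ij => if α ^ ((ij.2 : ℕ) + 1) = a ij.1 then 1 else 0

/-- The ideal I_q encoding the additive structure of F_q: generated by
x_{iu}x_{iv} − x_{iw} for α^u + α^v = α^w and x_{iu}x_{iv} − 1 for α^u + α^v = 0. -/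
noncomputable def addIdeal {F : Type*} [Field F] (q n : ℕ) (α : F)
    (K : Type*) [Field K] : Ideal (MvPolynomial (Fin n × Fin (q - 1)) K) :=
  Ideal.span
    ({f | ∃ (i : Fin n) (u v w : Fin (q - 1)),
        α ^ ((u : ℕ) + 1) + α ^ ((v : ℕ) + 1) = α ^ ((w : ℕ) + 1) ∧
        f = X (i, u) * X (i, v) - X (i, w)} ∪
     {f | ∃ (i : Fin n) (u v : Fin (q - 1)),
        α ^ ((u : ℕ) + 1) + α ^ ((v : ℕ) + 1) = 0 ∧
        f = X (i, u) * X (i, v) - 1})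


open MvPolynomial

section Aux
variable {F : Type*} [Field F] [Fintype F] [DecidableEq F] {q : ℕ}
  (hq : Fintype.card F = q) {α : F} (hα : orderOf α = q - 1)

include hq in
lemma aux_two_le : 2 ≤ q := hq ▸ Fintype.one_lt_card

include hq hα in
lemma aux_alpha_ne : α ≠ 0 := by
  intro h
  have h1 : α ^ orderOf α = 1 := pow_orderOf_eq_one α
  rw [hα, h] at h1
  have h2 : 2 ≤ q := aux_two_le hq
  rw [zero_pow (by omega : q - 1 ≠ 0)] at h1
  exact zero_ne_one h1

include hq hα in
lemma aux_inj (u v : Fin (q - 1)) (h : α ^ ((u:ℕ)+1) = α ^ ((v:ℕ)+1)) : u = v := by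
  have hne : α ≠ 0 := aux_alpha_ne hq hα
  have key : ∀ u v : Fin (q-1), (u:ℕ) ≤ (v:ℕ) → α ^ ((u:ℕ)+1) = α ^ ((v:ℕ)+1) → u = v := by
    intro u v huv h
    have h2 : α ^ ((v:ℕ)+1) = α ^ ((u:ℕ)+1) * α ^ ((v:ℕ)-(u:ℕ)) := by
      rw [← pow_add]; congr 1; omega
    have h3 : α ^ ((u:ℕ)+1) * 1 = α ^ ((u:ℕ)+1) * α ^ ((v:ℕ)-(u:ℕ)) := by
      rw [mul_one, ← h2]; exact h
    have h4 := mul_left_cancel₀ (pow_ne_zero _ hne) h3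
    have h5 : orderOf α ∣ (v:ℕ) - (u:ℕ) := orderOf_dvd_of_pow_eq_one h4.symm
    rw [hα] at h5
    have hv := v.isLt
    have h6 : (v:ℕ) - (u:ℕ) = 0 := Nat.eq_zero_of_dvd_of_lt h5 (by omega)
    exact Fin.ext (by omega)
  rcases le_total (u:ℕ) (v:ℕ) with huv | huv
  · exact key u v huv h
  · exact (key v u huv h.symm).symm

include hq hα in
lemma aux_surj (c : F) (hc : c ≠ 0) : ∃ u : Fin (q - 1), α ^ ((u:ℕ)+1) = c := by
  classical
  have hne : α ≠ 0 := aux_alpha_ne hq hα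
  set f : Fin (q-1) → F := fun u => α ^ ((u:ℕ)+1) with hf
  have hinj : Function.Injective f := fun u v h => aux_inj hq hα u v h
  have hsub : Finset.univ.image f ⊆ Finset.univ.erase 0 := by
    intro x hx
    simp only [Finset.mem_image] at hx
    obtain ⟨u, _, rfl⟩ := hx
    exact Finset.mem_erase.2 ⟨pow_ne_zero _ hne, Finset.mem_univ _⟩
  have hcard : (Finset.univ.erase (0:F)).card ≤ (Finset.univ.image f).card := by
    rw [Finset.card_image_of_injective _ hinj, Finset.card_erase_of_mem (Finset.mem_univ _),
      Finset.card_univ, Finset.card_univ, hq, Fintype.card_fin]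
  have heq := Finset.eq_of_subset_of_card_le hsub hcard
  have : c ∈ Finset.univ.image f := by
    rw [heq]; exact Finset.mem_erase.2 ⟨hc, Finset.mem_univ _⟩
  simpa using this

end Aux
section Main

variable {F : Type*} [Field F] [Fintype F] [DecidableEq F]

/-- Per-coordinate piece of the crossing map. -/
noncomputable def rowE (q n : ℕ) (α : F) (i : Fin n) (c : F) :
    (Fin n × Fin (q - 1)) →₀ ℕ :=
  Finsupp.equivFunOnFinite.symm
    fun ij => if ij.1 = i ∧ α ^ ((ij.2 : ℕ) + 1) = c then 1 else 0

lemma crossF_eq_sum (q n : ℕ) (α : F) (a : Fin n → F) :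
    crossF q n α a = ∑ i : Fin n, rowE q n α i (a i) := by
  ext ij
  rw [Finsupp.finset_sum_apply]
  simp only [crossF, rowE, Finsupp.equivFunOnFinite_symm_apply_apply]
  rw [Finset.sum_eq_single ij.1]
  · simp
  · intro b _ hb
    simp [Ne.symm hb]
  · intro h
    exact absurd (Finset.mem_univ _) h

lemma rowE_zero (q n : ℕ) {α : F} (hne : α ≠ 0) (i : Fin n) :
    rowE q n α i 0 = 0 := by
  ext ij
  simp only [rowE, Finsupp.equivFunOnFinite_symm_apply_apply, Finsupp.coe_zero, Pi.zero_apply]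
  rw [if_neg]
  rintro ⟨-, h⟩
  exact pow_ne_zero _ hne h

lemma rowE_pow {q : ℕ} (n : ℕ) (hq : Fintype.card F = q) {α : F}
    (hα : orderOf α = q - 1) (i : Fin n) (u : Fin (q - 1)) :
    rowE q n α i (α ^ ((u : ℕ) + 1)) = Finsupp.single (i, u) 1 := by
  ext ij
  simp only [rowE, Finsupp.equivFunOnFinite_symm_apply_apply, Finsupp.single_apply]
  by_cases h : (i, u) = ij
  · rw [if_pos, if_pos h]
    subst h
    exact ⟨rfl, rfl⟩
  · rw [if_neg, if_neg h]
    rintro ⟨h1, h2⟩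
    exact h (Prod.ext h1 (aux_inj hq hα ij.2 u h2)).symm

lemma monomial_finset_sum {σ : Type*} (K : Type*) [CommSemiring K] {ι : Type*}
    (s : Finset ι) (f : ι → (σ →₀ ℕ)) :
    MvPolynomial.monomial (∑ i ∈ s, f i) (1 : K) =
      ∏ i ∈ s, MvPolynomial.monomial (f i) (1 : K) := by
  classical
  induction s using Finset.induction_on with
  | empty => simp [MvPolynomial.monomial_zero']
  | insert _ _ hni ih =>
    rw [Finset.sum_insert hni, Finset.prod_insert hni, ← ih, MvPolynomial.monomial_mul, one_mul]

lemma key_row {q : ℕ} (n : ℕ) (hq : Fintype.card F = q) {α : F}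
    (hα : orderOf α = q - 1) (K : Type*) [Field K] (i : Fin n) (c d : F) :
    Ideal.Quotient.mk (addIdeal q n α K)
        (monomial (rowE q n α i c + rowE q n α i d) 1) =
      Ideal.Quotient.mk (addIdeal q n α K) (monomial (rowE q n α i (c + d)) 1) := by
  have hne : α ≠ 0 := aux_alpha_ne hq hα
  by_cases hc : c = 0
  · subst hc; rw [rowE_zero q n hne, zero_add, zero_add]
  by_cases hd : d = 0
  · subst hd; rw [rowE_zero q n hne, add_zero, add_zero]
  obtain ⟨u, hu⟩ := aux_surj hq hα c hc
  obtain ⟨v, hv⟩ := aux_surj hq hα d hd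
  rw [← hu, ← hv, rowE_pow n hq hα, rowE_pow n hq hα]
  have hX : monomial (Finsupp.single (i, u) 1 + Finsupp.single (i, v) 1) (1 : K)
      = X (i, u) * X (i, v) := by
    rw [MvPolynomial.X, MvPolynomial.X, MvPolynomial.monomial_mul, one_mul]
  rw [hX, hu, hv]
  by_cases h0 : c + d = 0
  · rw [h0, rowE_zero q n hne]
    have h1 : monomial (0 : (Fin n × Fin (q - 1)) →₀ ℕ) (1 : K) = 1 := by
      simp [MvPolynomial.monomial_zero']
    rw [h1, Ideal.Quotient.eq]
    apply Ideal.subset_span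
    exact Or.inr ⟨i, u, v, by rw [hu, hv]; exact h0, rfl⟩
  · obtain ⟨w, hw⟩ := aux_surj hq hα (c + d) h0
    rw [← hw, rowE_pow n hq hα, ← MvPolynomial.X, Ideal.Quotient.eq]
    apply Ideal.subset_span
    exact Or.inl ⟨i, u, v, w, by rw [hu, hv, hw], rfl⟩

end Main

/-- for any a, b ∈ F_q^n, x^{▲a + ▲b} ≡ x^{▲(a+b)} mod I_q. -/
theorem stmt_8 {F : Type*} [Field F] [Fintype F] [DecidableEq F] (q n : ℕ)
    (hq : Fintype.card F = q) (α : F) (hα : orderOf α = q - 1)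
    (K : Type*) [Field K] (a b : Fin n → F) :
    monomial (crossF q n α a + crossF q n α b) (1 : K)
      - monomial (crossF q n α (a + b)) 1 ∈ addIdeal q n α K := by
  rw [← Ideal.Quotient.eq]
  rw [crossF_eq_sum, crossF_eq_sum, crossF_eq_sum, ← Finset.sum_add_distrib,
    monomial_finset_sum, monomial_finset_sum]
  rw [map_prod, map_prod]
  apply Finset.prod_congr rfl
  intro i _
  have := key_row n hq hα K i (a i) (b i)
  simpa only [Pi.add_apply] using this
end

section
/- Let C be a linear code over F_p with minimum distance d and error-correcting capability t = ⌊(d−1)/2⌋, and let G be a Gröbner basis for the code ideal I(C). Suppose w ∈ F_p^n, and the remainder of x^w on division by G is a monomial x^f with wt(f) ≤ t. Then if w = c + e for some codeword c ∈ C with wt(e) ≤ t, it follows that f = e and w − f = c; in particular w − f is the unique codeword within Hamming distance t of w. -/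
open MvPolynomial

/-- Exponent vector in {0,…,p−1}^n ⊆ ℕ^n of a word over F_p. -/
noncomputable def toExp {p n : ℕ} (c : Fin n → ZMod p) : Fin n →₀ ℕ :=
  Finsupp.equivFunOnFinite.symm fun i => (c i).val

section aux

variable {p n : ℕ} {K : Type*} [Field K] (C : Submodule (ZMod p) (Fin n → ZMod p))

/-- The homomorphism to the group algebra of the quotient group. -/
noncomputable def codePhi : MvPolynomial (Fin n) K →ₐ[K]
    AddMonoidAlgebra K ((Fin n → ZMod p) ⧸ C) :=
  aeval fun i => AddMonoidAlgebra.single (Submodule.Quotient.mk (Pi.single i 1)) 1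

lemma codePhi_monomial (a : Fin n →₀ ℕ) :
    codePhi C (monomial a (1 : K)) =
      AddMonoidAlgebra.single
        (Submodule.Quotient.mk (fun i => (a i : ZMod p))) 1 := by
  rw [codePhi, aeval_monomial, map_one, one_mul]
  have h1 : (a.prod fun i k =>
      (AddMonoidAlgebra.single (Submodule.Quotient.mk (Pi.single i 1) :
        (Fin n → ZMod p) ⧸ C) (1 : K)) ^ k)
      = ∏ i : Fin n, AddMonoidAlgebra.single
          (a i • (Submodule.Quotient.mk (Pi.single i 1) : (Fin n → ZMod p) ⧸ C)) (1 : K) := by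
    rw [Finsupp.prod_fintype]
    · exact Finset.prod_congr rfl fun i _ => by
        rw [AddMonoidAlgebra.single_pow, one_pow]
    · intro i; simp
  rw [h1, AddMonoidAlgebra.prod_single, Finset.prod_const_one]
  congr 1
  have : ∀ i : Fin n, a i • (Submodule.Quotient.mk (Pi.single i 1) : (Fin n → ZMod p) ⧸ C)
      = Submodule.Quotient.mk (a i • Pi.single i (1 : ZMod p)) := fun i => rfl
  simp_rw [this, ← Submodule.mkQ_apply, ← map_sum]
  congr 1
  funext j
  have hsingle : ∀ i : Fin n, a i • (Pi.single i (1 : ZMod p) : Fin n → ZMod p)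
      = Pi.single i ((a i : ZMod p)) := by
    intro i
    funext j
    rw [Pi.smul_apply, Pi.single_apply, Pi.single_apply]
    split_ifs
    · simp [nsmul_eq_mul]
    · simp
  simp_rw [hsingle]
  rw [Finset.univ_sum_single (fun i => (a i : ZMod p))]

lemma codePhi_ker : codeIdeal p K C ≤ RingHom.ker (codePhi (K := K) C).toRingHom := by
  rw [codeIdeal, Ideal.span_le]
  rintro g (⟨a, b, hab, rfl⟩ | ⟨i, rfl⟩)
  · simp only [SetLike.mem_coe, RingHom.mem_ker, AlgHom.toRingHom_eq_coe,
      RingHom.coe_coe, map_sub]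
    rw [codePhi_monomial, codePhi_monomial, sub_eq_zero]
    congr 1
    rw [Submodule.Quotient.eq]
    exact hab
  · simp only [SetLike.mem_coe, RingHom.mem_ker, AlgHom.toRingHom_eq_coe,
      RingHom.coe_coe, map_sub, map_pow, map_one]
    have : codePhi (K := K) C (X i) =
        AddMonoidAlgebra.single (Submodule.Quotient.mk (Pi.single i 1)) 1 := by
      rw [codePhi, aeval_X]
    rw [this, AddMonoidAlgebra.single_pow, one_pow, sub_eq_zero]
    have : p • (Submodule.Quotient.mk (Pi.single i 1) : (Fin n → ZMod p) ⧸ C)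
        = Submodule.Quotient.mk (p • Pi.single i (1 : ZMod p)) := rfl
    rw [this]
    have : p • (Pi.single i (1 : ZMod p) : Fin n → ZMod p) = 0 := by
      funext j
      rw [Pi.smul_apply, Pi.single_apply]
      split_ifs
      · simp [nsmul_eq_mul, ZMod.natCast_self]
      · simp
    rw [this, Submodule.Quotient.mk_zero]
    rfl

/-- Words of weight `≤ 2t` in the code are zero. -/
lemma small_weight_zero {d t : ℕ}
    (hd : ∀ c ∈ C, c ≠ (0 : Fin n → ZMod p) → d ≤ hammingNorm c)
    (ht : t = (d - 1) / 2) (v : Fin n → ZMod p) (hv : v ∈ C)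
    (hwt : hammingNorm v ≤ 2 * t) : v = 0 := by
  by_contra hv0
  have h1 := hd v hv hv0
  have h2 : 2 * t ≤ d - 1 := by omega
  have hd0 : d = 0 := by omega
  have ht0 : t = 0 := by omega
  rw [ht0, mul_zero, Nat.le_zero, hammingNorm_eq_zero] at hwt
  exact hv0 hwt

end aux

/-- let C have minimum distance d and error-correcting capability
t = ⌊(d−1)/2⌋.  If the remainder of x^w on division by a Gröbner basis of I(C)
is a monomial x^f (so that x^w − x^f ∈ I(C)) with wt(f) ≤ t, and w = c + e for
a codeword c and an error e of weight ≤ t, then f = e and w − f = c; in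
particular w − f is the unique codeword within Hamming distance t of w. -/
theorem stmt_17 (p : ℕ) (hp : p.Prime) (K : Type*) [Field K] (n d t : ℕ)
    (C : Submodule (ZMod p) (Fin n → ZMod p))
    (hd : ∀ c ∈ C, c ≠ (0 : Fin n → ZMod p) → d ≤ hammingNorm c)
    (ht : t = (d - 1) / 2)
    (w c e : Fin n → ZMod p) (hc : c ∈ C) (hw : w = c + e)
    (he : hammingNorm e ≤ t)
    (f : Fin n →₀ ℕ)
    (hrem : monomial (toExp w) (1 : K) - monomial f 1 ∈ codeIdeal p K C)
    (hwf : f.support.card ≤ t) :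
    (fun i => ((f i : ZMod p))) = e ∧
      w - (fun i => ((f i : ZMod p))) = c ∧
      ∀ c' ∈ C, hammingDist w c' ≤ t → c' = c := by
  set fc : Fin n → ZMod p := fun i => ((f i : ZMod p)) with hfc
  -- Step 1 : w - fc ∈ C
  have hker := codePhi_ker C hrem
  rw [RingHom.mem_ker, AlgHom.toRingHom_eq_coe, RingHom.coe_coe, map_sub,
    codePhi_monomial, codePhi_monomial, sub_eq_zero] at hker
  haveI : NeZero p := ⟨hp.pos.ne'⟩
  have htw : (fun i => ((toExp w) i : ZMod p)) = w := by
    funext i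
    simp only [toExp, Finsupp.coe_equivFunOnFinite_symm]
    rw [ZMod.natCast_val, ZMod.cast_id]
  rw [htw] at hker
  have hq : (Submodule.Quotient.mk w : (Fin n → ZMod p) ⧸ C) = Submodule.Quotient.mk fc := by
    exact AddMonoidAlgebra.single_left_injective (one_ne_zero (α := K)) hker
  rw [Submodule.Quotient.eq] at hq
  -- Step 2 : weight of fc
  have hfcwt : hammingNorm fc ≤ t := by
    refine le_trans ?_ hwf
    apply Finset.card_le_card
    intro i hi
    rw [Finset.mem_filter] at hi
    rw [Finsupp.mem_support_iff]
    intro h0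
    exact hi.2 (by rw [hfc]; simp [h0])
  -- Step 3 : e - fc ∈ C with small weight
  have hefc : e - fc ∈ C := by
    have : e - fc = (w - fc) - c := by rw [hw]; ring
    rw [this]
    exact Submodule.sub_mem C hq hc
  have hwt : hammingNorm (e - fc) ≤ 2 * t := by
    calc hammingNorm (e - fc) = hammingDist e fc := by
          rw [hammingDist_comm, hammingDist_eq_hammingNorm, neg_add_eq_sub]
      _ ≤ hammingDist e 0 + hammingDist 0 fc := hammingDist_triangle e 0 fc
      _ = hammingNorm e + hammingNorm fc := by
          rw [hammingDist_zero_right, hammingDist_zero_left]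
      _ ≤ t + t := add_le_add he hfcwt
      _ = 2 * t := by ring
  have hef : e - fc = 0 := small_weight_zero C hd ht _ hefc hwt
  have hfe : fc = e := by
    have := sub_eq_zero.mp hef; rw [this]
  refine ⟨hfe, ?_, ?_⟩
  · rw [hfe, hw, add_sub_cancel_right]
  · intro c' hc' hdist
    have hcc' : c - c' ∈ C := Submodule.sub_mem C hc hc'
    have hwc : hammingDist c w = hammingNorm e := by
      rw [hammingDist_eq_hammingNorm]
      congr 1
      rw [hw]; abel
    have hwt' : hammingNorm (c - c') ≤ 2 * t := by
      calc hammingNorm (c - c') = hammingDist c c' := by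
            rw [hammingDist_comm, hammingDist_eq_hammingNorm, neg_add_eq_sub]
        _ ≤ hammingDist c w + hammingDist w c' := hammingDist_triangle c w c'
        _ ≤ t + t := add_le_add (hwc ▸ he) hdist
        _ = 2 * t := by ring
    have := small_weight_zero C hd ht _ hcc' hwt'
    have := sub_eq_zero.mp this
    exact this.symm
end

section
/- Let C be a linear code over F_p, ≻ a monomial order on K[x_1,…,x_n], G a Gröbner basis of the code ideal I(C), and t the error-correcting capability. If w = c + e with c ∈ C and wt(e) ≤ t, and the remainder of x^w on division by G is a standard monomial x^f with wt(f) > t, then the monomial x^e belongs to the leading ideal lt_≻(I(C)). -/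
open MvPolynomial

/-- `d` is the leading exponent of `f` w.r.t. the monomial order `le`. -/
def IsLeadExp {σ K : Type*} [CommSemiring K] (le : (σ →₀ ℕ) → (σ →₀ ℕ) → Prop)
    (f : MvPolynomial σ K) (d : σ →₀ ℕ) : Prop :=
  d ∈ f.support ∧ ∀ e ∈ f.support, le e d

/-- Leading ideal of `I` w.r.t. the monomial order `le`. -/
noncomputable def leadIdeal {σ K : Type*} [CommSemiring K]
    (le : (σ →₀ ℕ) → (σ →₀ ℕ) → Prop) (I : Ideal (MvPolynomial σ K)) :
    Ideal (MvPolynomial σ K) :=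
  Ideal.span {q | ∃ f ∈ I, ∃ d, IsLeadExp le f d ∧ q = monomial d (1 : K)}

/-- if w = c + e with c ∈ C, wt(e) ≤ t, and the remainder of x^w on
division by a Gröbner basis of I(C) is a standard monomial x^f with wt(f) > t,
then x^e ∈ lt_≻(I(C)). -/
theorem stmt_19 (p : ℕ) (hp : p.Prime) (K : Type*) [Field K] (n t : ℕ)
    (C : Submodule (ZMod p) (Fin n → ZMod p))
    (le : (Fin n →₀ ℕ) → (Fin n →₀ ℕ) → Prop)
    (hrefl : Reflexive le) (htrans : Transitive le)
    (hantisymm : AntiSymmetric le) (htotal : Total le)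
    (hzero : ∀ a : Fin n →₀ ℕ, le 0 a)
    (hadd : ∀ a b c : Fin n →₀ ℕ, le a b → le (a + c) (b + c))
    (w c e : Fin n → ZMod p) (hc : c ∈ C) (hw : w = c + e)
    (he : hammingNorm e ≤ t)
    (f : Fin n →₀ ℕ)
    (hrem : monomial (toExp w) (1 : K) - monomial f 1 ∈ codeIdeal p K C)
    (hstd : monomial f (1 : K) ∉ leadIdeal le (codeIdeal p K C))
    (hwf : t < f.support.card) :
    monomial (toExp e) (1 : K) ∈ leadIdeal le (codeIdeal p K C) := by
  haveI : NeZero p := ⟨hp.ne_zero⟩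
  set a := toExp e with ha
  -- x^w - x^e is a binomial generator
  have hmem1 : monomial (toExp w) (1 : K) - monomial a 1 ∈ codeIdeal p K C := by
    apply Ideal.subset_span
    left
    refine ⟨toExp w, a, ?_, rfl⟩
    have hfun : (fun i => ((toExp w i : ZMod p) - (toExp e i : ZMod p))) = c := by
      funext i
      simp [toExp, hw, ZMod.natCast_val, ZMod.cast_id]
    rw [ha, hfun]; exact hc
  -- hence x^e - x^f ∈ I(C)
  have hg : monomial a (1 : K) - monomial f 1 ∈ codeIdeal p K C := by
    have heq : monomial a (1 : K) - monomial f 1 =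
        (monomial (toExp w) (1 : K) - monomial f 1) -
        (monomial (toExp w) (1 : K) - monomial a 1) := by ring
    rw [heq]; exact Ideal.sub_mem _ hrem hmem1
  -- support card of toExp e equals hamming norm
  have hcard : a.support.card = hammingNorm e := by
    have hsupp : a.support = Finset.univ.filter (fun i => e i ≠ 0) := by
      ext i
      simp [ha, toExp, Finsupp.mem_support_iff, ZMod.val_eq_zero]
    rw [hsupp]
    rfl
  have hane : a ≠ f := by
    intro h
    rw [← h, hcard] at hwf
    omega
  -- support facts for the binomial g
  have hsup : ∀ d ∈ (monomial a (1 : K) - monomial f 1).support, d = a ∨ d = f := by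
    intro d hd
    rw [MvPolynomial.mem_support_iff] at hd
    by_contra h
    push_neg at h
    simp [MvPolynomial.coeff_sub, MvPolynomial.coeff_monomial,
      Ne.symm h.1, Ne.symm h.2] at hd
  have hamem : a ∈ (monomial a (1 : K) - monomial f 1).support := by
    rw [MvPolynomial.mem_support_iff, MvPolynomial.coeff_sub,
      MvPolynomial.coeff_monomial, MvPolynomial.coeff_monomial,
      if_pos rfl, if_neg (Ne.symm hane)]
    simp
  have hfmem : f ∈ (monomial a (1 : K) - monomial f 1).support := by
    rw [MvPolynomial.mem_support_iff, MvPolynomial.coeff_sub,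
      MvPolynomial.coeff_monomial, MvPolynomial.coeff_monomial,
      if_neg hane, if_pos rfl]
    simp
  rcases htotal a f with h | h
  · exfalso
    apply hstd
    apply Ideal.subset_span
    refine ⟨_, hg, f, ⟨hfmem, ?_⟩, rfl⟩
    intro d hd
    rcases hsup d hd with rfl | rfl
    · exact h
    · exact hrefl _
  · apply Ideal.subset_span
    refine ⟨_, hg, a, ⟨hamem, ?_⟩, rfl⟩
    intro d hd
    rcases hsup d hd with rfl | rfl
    · exact hrefl _
    · exact h
end
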